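/- arXiv:2207.11122 — 5 statements merged into one kernel-verified Lean document; each statement's English description precedes it below -/
import Mathlib

section
/- Let T be a finite index set and let μ_j ≥ 0 and b_j ≥ 0 be real numbers for each j ∈ T. If Σ_{j∈T} μ_j + √(Σ_{j∈T} b_j) > 1 (i.e., T is infeasible for unit capacity), then Σ_{j∈T} (μ_j + b_j) > 3/4. -/
open Finset

/-- If a finite item set `T` with nonnegative mean usages `μ` and nonnegative
uncertainties `b` is infeasible for unit capacity, i.e.,
`Σ_{j∈T} μ j + √(Σ_{j∈T} b j) > 1`, then `Σ_{j∈T} (μ j + b j) > 3/4`. -/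
theorem infeasible_set_sum_gt (ι : Type*) (T : Finset ι) (μ b : ι → ℝ)
    (hμ : ∀ j ∈ T, 0 ≤ μ j) (hb : ∀ j ∈ T, 0 ≤ b j)
    (hinf : (∑ j ∈ T, μ j) + Real.sqrt (∑ j ∈ T, b j) > 1) :
    (∑ j ∈ T, (μ j + b j)) > 3 / 4 := by
  rw [Finset.sum_add_distrib]
  have hB : (0:ℝ) ≤ ∑ j ∈ T, b j := Finset.sum_nonneg hb
  have hM : (0:ℝ) ≤ ∑ j ∈ T, μ j := Finset.sum_nonneg hμ
  have hs := Real.sq_sqrt hB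
  nlinarith [Real.sqrt_nonneg (∑ j ∈ T, b j), sq_nonneg ((∑ j ∈ T, μ j) - 1/2)]
end

section
/- Let J be a finite set of items with mean usages μ_j ≥ 0 and uncertainties b_j ≥ 0, partitioned into N pairwise disjoint bins S_1, …, S_N with N ≥ 2. Suppose that for every pair of distinct indices i ≠ i₀ the union S_i ∪ S_{i₀} is infeasible for unit capacity, i.e., Σ_{j ∈ S_i ∪ S_{i₀}} μ_j + √(Σ_{j ∈ S_i ∪ S_{i₀}} b_j) > 1. Then (3/8)·N < Σ_{j∈J} (μ_j + b_j). -/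
open Finset

/-- If a finite item set `J` with nonnegative means `μ` and nonnegative uncertainties `b`
is partitioned into `N ≥ 2` pairwise disjoint bins such that the union of any two distinct
bins is infeasible for unit capacity, then `(3/8)·N < Σ_{j∈J} (μ j + b j)`. -/
theorem pairwise_infeasible_lower_bound (ι : Type*) [DecidableEq ι] (N : ℕ) (hN : 2 ≤ N)
    (J : Finset ι) (S : Fin N → Finset ι)
    (hdisj : ∀ i i₀ : Fin N, i ≠ i₀ → Disjoint (S i) (S i₀))
    (hcover : Finset.univ.biUnion S = J)
    (μ b : ι → ℝ) (hμ : ∀ j ∈ J, 0 ≤ μ j) (hb : ∀ j ∈ J, 0 ≤ b j)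
    (hinf : ∀ i i₀ : Fin N, i ≠ i₀ →
      (∑ j ∈ S i ∪ S i₀, μ j) + Real.sqrt (∑ j ∈ S i ∪ S i₀, b j) > 1) :
    (3 / 8 : ℝ) * N < ∑ j ∈ J, (μ j + b j) := by
  have hSJ : ∀ i, S i ⊆ J := fun i => hcover ▸ Finset.subset_biUnion_of_mem S (mem_univ i)
  set x : Fin N → ℝ := fun i => ∑ j ∈ S i, (μ j + b j) with hx
  set T : ℝ := ∑ i, x i with hTdef
  -- pairwise bound
  have hpair : ∀ i i₀ : Fin N, i ≠ i₀ → 3 / 4 < x i + x i₀ := by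
    intro i i₀ h
    have hd := hdisj i i₀ h
    have hs := hinf i i₀ h
    rw [Finset.sum_union hd, Finset.sum_union hd] at hs
    set s := (∑ j ∈ S i, μ j) + ∑ j ∈ S i₀, μ j with hsdef
    set t := (∑ j ∈ S i, b j) + ∑ j ∈ S i₀, b j with htdef
    have ht : 0 ≤ t := by
      apply add_nonneg <;> exact Finset.sum_nonneg fun j hj => hb j (hSJ _ hj)
    have hu := Real.sq_sqrt ht
    have hu0 := Real.sqrt_nonneg t
    have hval : x i + x i₀ = s + t := by
      simp only [hx, hsdef, htdef, Finset.sum_add_distrib]; ring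
    rw [hval]
    nlinarith [sq_nonneg (Real.sqrt t - 1 / 2)]
  have hT : ∑ j ∈ J, (μ j + b j) = T := by
    rw [← hcover, Finset.sum_biUnion]
    intro i _ i₀ _ h
    exact hdisj i i₀ h
  rw [hT]
  have hNpos : (0:ℝ) < (N:ℝ) - 1 := by
    have : (2:ℝ) ≤ (N:ℝ) := by exact_mod_cast hN
    linarith
  set f : Fin N → ℝ := fun i => ∑ i₀ ∈ univ.erase i, (x i + x i₀) with hf
  have hfval : ∀ i, f i = ((N:ℝ) - 1) * x i + (T - x i) := by
    intro i
    rw [hf]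
    simp only
    rw [Finset.sum_add_distrib, Finset.sum_const, Finset.card_erase_of_mem (mem_univ i),
      card_univ, Fintype.card_fin, nsmul_eq_mul, Finset.sum_erase_eq_sub (mem_univ i)]
    have : ((N - 1 : ℕ) : ℝ) = (N:ℝ) - 1 := by
      have : 1 ≤ N := by omega
      push_cast [this]; ring
    rw [this]
  have hne : ∀ i : Fin N, (univ.erase i).Nonempty := by
    intro i
    rw [← Finset.card_pos, Finset.card_erase_of_mem (mem_univ i), card_univ, Fintype.card_fin]
    omega
  have hlb : ∀ i : Fin N, ((N:ℝ) - 1) * (3 / 4) < f i := by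
    intro i
    have := Finset.sum_lt_sum_of_nonempty (hne i)
      (f := fun _ => (3 / 4 : ℝ)) (g := fun i₀ => x i + x i₀)
      (fun i₀ hi₀ => hpair i i₀ (fun he => (Finset.mem_erase.1 hi₀).1 he.symm))
    rw [Finset.sum_const, Finset.card_erase_of_mem (mem_univ i), card_univ,
      Fintype.card_fin, nsmul_eq_mul] at this
    have hcast : ((N - 1 : ℕ) : ℝ) = (N:ℝ) - 1 := by
      have : 1 ≤ N := by omega
      push_cast [this]; ring
    rw [hcast] at this
    exact this
  have huniv : (univ : Finset (Fin N)).Nonempty := by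
    rw [← Finset.card_pos, card_univ, Fintype.card_fin]; omega
  have hsumlt : ∑ i : Fin N, ((N:ℝ) - 1) * (3 / 4) < ∑ i, f i :=
    Finset.sum_lt_sum_of_nonempty huniv (fun i _ => hlb i)
  have hsumval : ∑ i, f i = 2 * ((N:ℝ) - 1) * T := by
    rw [Finset.sum_congr rfl (fun i _ => hfval i), Finset.sum_add_distrib,
      Finset.sum_sub_distrib, ← Finset.mul_sum, Finset.sum_const, card_univ,
      Fintype.card_fin, nsmul_eq_mul, ← hTdef]
    ring
  rw [hsumval, Finset.sum_const, card_univ, Fintype.card_fin, nsmul_eq_mul] at hsumlt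
  nlinarith [hsumlt, hNpos]
end

section
/- Let J be a nonempty finite set of items with mean usages μ_j ≥ 0 and uncertainties b_j ≥ 0. Suppose J is partitioned into N nonempty pairwise disjoint bins S_1, …, S_N such that every bin is feasible for unit capacity (Σ_{j∈S_i} μ_j + √(Σ_{j∈S_i} b_j) ≤ 1) and every union of two distinct bins is infeasible for unit capacity (Σ_{j∈S_i∪S_{i₀}} μ_j + √(Σ_{j∈S_i∪S_{i₀}} b_j) > 1 for all i ≠ i₀). Suppose also that J admits another partition into N* pairwise disjoint bins each of which is feasible for unit capacity. Then N < (8/3)·N*. -/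
open Finset

/-- Theorem 5 (combinatorial core): let a nonempty finite item set `J` with nonnegative
means `μ` and nonnegative uncertainties `b` be partitioned into `N` nonempty pairwise
disjoint bins, each feasible for unit capacity, such that the union of any two distinct
bins is infeasible. If `J` also admits a partition into `N*` pairwise disjoint bins each
feasible for unit capacity, then `N < (8/3)·N*`. -/
theorem ucac_machines_bound (ι : Type*) [DecidableEq ι]
    (J : Finset ι) (hJ : J.Nonempty)
    (μ b : ι → ℝ) (hμ : ∀ j ∈ J, 0 ≤ μ j) (hb : ∀ j ∈ J, 0 ≤ b j)
    (N : ℕ) (S : Fin N → Finset ι)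
    (hSne : ∀ i : Fin N, (S i).Nonempty)
    (hdisj : ∀ i i₀ : Fin N, i ≠ i₀ → Disjoint (S i) (S i₀))
    (hcover : Finset.univ.biUnion S = J)
    (hfeas : ∀ i : Fin N, (∑ j ∈ S i, μ j) + Real.sqrt (∑ j ∈ S i, b j) ≤ 1)
    (hinf : ∀ i i₀ : Fin N, i ≠ i₀ →
      (∑ j ∈ S i ∪ S i₀, μ j) + Real.sqrt (∑ j ∈ S i ∪ S i₀, b j) > 1)
    (Nstar : ℕ) (Sstar : Fin Nstar → Finset ι)
    (hdisj' : ∀ i i₀ : Fin Nstar, i ≠ i₀ → Disjoint (Sstar i) (Sstar i₀))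
    (hcover' : Finset.univ.biUnion Sstar = J)
    (hfeas' : ∀ i : Fin Nstar,
      (∑ j ∈ Sstar i, μ j) + Real.sqrt (∑ j ∈ Sstar i, b j) ≤ 1) :
    (N : ℝ) < (8 / 3) * Nstar := by
  classical
  -- N* ≥ 1
  have hNstar0 : Nstar ≠ 0 := by
    intro h
    subst h
    have : (Finset.univ : Finset (Fin 0)).biUnion Sstar = ∅ := by simp
    rw [hcover'] at this
    exact hJ.ne_empty this
  have hNstar1 : (1:ℝ) ≤ (Nstar : ℝ) := by
    exact_mod_cast Nat.one_le_iff_ne_zero.mpr hNstar0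
  -- trivial case N ≤ 1
  by_cases hN2 : N ≤ 1
  · have : (N:ℝ) ≤ 1 := by exact_mod_cast hN2
    nlinarith
  push_neg at hN2
  have hN1 : (1:ℝ) < (N:ℝ) := by exact_mod_cast hN2
  -- abbreviations
  set m : Fin N → ℝ := fun i => ∑ j ∈ S i, μ j with hm_def
  set s : Fin N → ℝ := fun i => ∑ j ∈ S i, b j with hs_def
  have hSsub : ∀ i : Fin N, S i ⊆ J := by
    intro i
    rw [← hcover]
    exact Finset.subset_biUnion_of_mem S (mem_univ i)
  have hm0 : ∀ i, 0 ≤ m i := fun i =>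
    Finset.sum_nonneg fun j hj => hμ j (hSsub i hj)
  have hs0 : ∀ i, 0 ≤ s i := fun i =>
    Finset.sum_nonneg fun j hj => hb j (hSsub i hj)
  -- pairwise lower bound
  have hpair : ∀ i k : Fin N, i ≠ k → (3:ℝ)/4 < (m i + s i) + (m k + s k) := by
    intro i k hik
    have hd := hdisj i k hik
    have h1 := hinf i k hik
    rw [Finset.sum_union hd, Finset.sum_union hd] at h1
    set r := Real.sqrt ((∑ j ∈ S i, b j) + ∑ j ∈ S k, b j) with hr_def
    have hr0 : 0 ≤ r := Real.sqrt_nonneg _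
    have hr2 : r ^ 2 = s i + s k := Real.sq_sqrt (add_nonneg (hs0 i) (hs0 k))
    have hms : (m i + m k) + r > 1 := h1
    nlinarith [sq_nonneg (r - 1/2), hm0 i, hm0 k]
  -- star bins: m* + s* ≤ 1
  have hSsub' : ∀ i : Fin Nstar, Sstar i ⊆ J := by
    intro i
    rw [← hcover']
    exact Finset.subset_biUnion_of_mem Sstar (mem_univ i)
  have hstar : ∀ i : Fin Nstar,
      (∑ j ∈ Sstar i, μ j) + (∑ j ∈ Sstar i, b j) ≤ 1 := by
    intro i
    have h := hfeas' i
    have hbs : 0 ≤ ∑ j ∈ Sstar i, b j :=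
      Finset.sum_nonneg fun j hj => hb j (hSsub' i hj)
    have hms : 0 ≤ ∑ j ∈ Sstar i, μ j :=
      Finset.sum_nonneg fun j hj => hμ j (hSsub' i hj)
    have hr0 : 0 ≤ Real.sqrt (∑ j ∈ Sstar i, b j) := Real.sqrt_nonneg _
    have hr1 : Real.sqrt (∑ j ∈ Sstar i, b j) ≤ 1 := by linarith
    have hr2 : (Real.sqrt (∑ j ∈ Sstar i, b j)) ^ 2 = ∑ j ∈ Sstar i, b j :=
      Real.sq_sqrt hbs
    nlinarith
  -- total T
  set T : ℝ := ∑ i : Fin N, (m i + s i) with hT_def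
  -- T equals the star total
  have hMm : ∑ i : Fin N, m i = ∑ j ∈ J, μ j := by
    rw [← hcover, Finset.sum_biUnion]
    intro i _ k _ hik
    exact hdisj i k hik
  have hBb : ∑ i : Fin N, s i = ∑ j ∈ J, b j := by
    rw [← hcover, Finset.sum_biUnion]
    intro i _ k _ hik
    exact hdisj i k hik
  have hMm' : ∑ i : Fin Nstar, (∑ j ∈ Sstar i, μ j) = ∑ j ∈ J, μ j := by
    rw [← hcover', Finset.sum_biUnion]
    intro i _ k _ hik
    exact hdisj' i k hik
  have hBb' : ∑ i : Fin Nstar, (∑ j ∈ Sstar i, b j) = ∑ j ∈ J, b j := by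
    rw [← hcover', Finset.sum_biUnion]
    intro i _ k _ hik
    exact hdisj' i k hik
  have hTle : T ≤ (Nstar : ℝ) := by
    have hTeq : T = ∑ i : Fin Nstar, ((∑ j ∈ Sstar i, μ j) + (∑ j ∈ Sstar i, b j)) := by
      rw [hT_def, Finset.sum_add_distrib, Finset.sum_add_distrib, hMm, hBb, hMm', hBb']
    rw [hTeq]
    calc ∑ i : Fin Nstar, ((∑ j ∈ Sstar i, μ j) + (∑ j ∈ Sstar i, b j))
        ≤ ∑ _i : Fin Nstar, (1:ℝ) := Finset.sum_le_sum fun i _ => hstar i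
      _ = (Nstar : ℝ) := by simp
  -- double sum lower bound
  have hNcast : ((N - 1 : ℕ) : ℝ) = (N : ℝ) - 1 := by
    have : 1 ≤ N := by omega
    push_cast [this]
    ring
  have key : ∀ i : Fin N,
      (3:ℝ)/4 * ((N:ℝ) - 1) < ∑ k ∈ univ.erase i, ((m i + s i) + (m k + s k)) := by
    intro i
    have hcard : (univ.erase i).card = N - 1 := by
      rw [Finset.card_erase_of_mem (mem_univ i), Finset.card_univ, Fintype.card_fin]
    have hne : (univ.erase i).Nonempty := by
      rw [← Finset.card_pos, hcard]
      omega
    calc (3:ℝ)/4 * ((N:ℝ) - 1) = ∑ _k ∈ univ.erase i, ((3:ℝ)/4) := by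
          rw [Finset.sum_const, hcard, nsmul_eq_mul, hNcast]
          ring
      _ < _ := Finset.sum_lt_sum_of_nonempty hne
          (fun k hk => hpair i k (Finset.ne_of_mem_erase hk).symm)
  have hsum : (3:ℝ)/4 * (N:ℝ) * ((N:ℝ) - 1)
      < ∑ i : Fin N, ∑ k ∈ univ.erase i, ((m i + s i) + (m k + s k)) := by
    have huniv : (univ : Finset (Fin N)).Nonempty := by
      rw [← Finset.card_pos, Finset.card_univ, Fintype.card_fin]
      omega
    calc (3:ℝ)/4 * (N:ℝ) * ((N:ℝ) - 1)
        = ∑ _i : Fin N, ((3:ℝ)/4 * ((N:ℝ) - 1)) := by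
          rw [Finset.sum_const, Finset.card_univ, Fintype.card_fin, nsmul_eq_mul]
          ring
      _ < _ := Finset.sum_lt_sum_of_nonempty huniv fun i _ => key i
  have heval : ∑ i : Fin N, ∑ k ∈ univ.erase i, ((m i + s i) + (m k + s k))
      = 2 * ((N:ℝ) - 1) * T := by
    have hinner : ∀ i : Fin N,
        ∑ k ∈ univ.erase i, ((m i + s i) + (m k + s k))
          = ((N:ℝ) - 1) * (m i + s i) + (T - (m i + s i)) := by
      intro i
      rw [Finset.sum_add_distrib, Finset.sum_const,
        Finset.card_erase_of_mem (mem_univ i), Finset.card_univ, Fintype.card_fin,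
        nsmul_eq_mul, hNcast, Finset.sum_erase_eq_sub (mem_univ i)]
    calc ∑ i : Fin N, ∑ k ∈ univ.erase i, ((m i + s i) + (m k + s k))
        = ∑ i : Fin N, (((N:ℝ) - 1) * (m i + s i) + (T - (m i + s i))) :=
          Finset.sum_congr rfl fun i _ => hinner i
      _ = ((N:ℝ) - 1) * T + ((N:ℝ) * T - T) := by
          rw [Finset.sum_add_distrib, ← Finset.mul_sum, Finset.sum_sub_distrib,
            Finset.sum_const, Finset.card_univ, Fintype.card_fin, nsmul_eq_mul, ← hT_def]
      _ = 2 * ((N:ℝ) - 1) * T := by ring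
  rw [heval] at hsum
  -- conclude
  have hT38 : (3:ℝ)/8 * (N:ℝ) < T := by nlinarith
  nlinarith
end

section
/- Let J be a finite set of items with mean usages μ_j ∈ ℝ and strictly positive uncertainties b_j > 0, let V be a capacity and D > 0. Call a partition P of J (into finitely many pairwise disjoint bins covering J) feasible if every bin S of P satisfies Σ_{j∈S} μ_j + D·√(Σ_{j∈S} b_j) ≤ V, and let its total UCaC be Σ_{S∈P} U(S) with U(S) = Σ_{j∈S} μ_j + D·√(Σ_{j∈S} b_j). If a feasible partition P minimizes total UCaC among all feasible partitions of J, then for any two distinct nonempty bins S, S' of P, the merged set is infeasible: Σ_{j∈S∪S'} μ_j + D·√(Σ_{j∈S∪S'} b_j) > V. -/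
open Finset

variable {ι : Type*} [DecidableEq ι]

/-- The UCaC of a bin `S`: `Σ_{j∈S} μ j + D·√(Σ_{j∈S} b j)`. -/
noncomputable def binUCaC (D : ℝ) (μ b : ι → ℝ) (S : Finset ι) : ℝ :=
  (∑ j ∈ S, μ j) + D * Real.sqrt (∑ j ∈ S, b j)

/-- `P` is a partition of `J` into pairwise disjoint bins covering `J`. -/
def IsBinPartition (J : Finset ι) (P : Finset (Finset ι)) : Prop :=
  (∀ S ∈ P, ∀ S' ∈ P, S ≠ S' → Disjoint S S') ∧ P.sup id = J

/-- `P` is a feasible partition of `J` for capacity `V`: it is a partition and every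
bin satisfies the capacity constraint. -/
noncomputable def IsFeasiblePartition (J : Finset ι) (V D : ℝ) (μ b : ι → ℝ)
    (P : Finset (Finset ι)) : Prop :=
  IsBinPartition J P ∧ ∀ S ∈ P, binUCaC D μ b S ≤ V

/-- The total UCaC of a partition. -/
noncomputable def totalUCaC (D : ℝ) (μ b : ι → ℝ) (P : Finset (Finset ι)) : ℝ :=
  ∑ S ∈ P, binUCaC D μ b S

lemma sqrt_add_lt {x y : ℝ} (hx : 0 < x) (hy : 0 < y) :
    Real.sqrt (x + y) < Real.sqrt x + Real.sqrt y := by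
  have hxs : (0:ℝ) < Real.sqrt x := Real.sqrt_pos.mpr hx
  have hys : (0:ℝ) < Real.sqrt y := Real.sqrt_pos.mpr hy
  have h : x + y < (Real.sqrt x + Real.sqrt y) ^ 2 := by
    have := mul_pos hxs hys
    nlinarith [Real.sq_sqrt hx.le, Real.sq_sqrt hy.le]
  calc Real.sqrt (x + y) < Real.sqrt ((Real.sqrt x + Real.sqrt y) ^ 2) :=
        Real.sqrt_lt_sqrt (by positivity) h
    _ = Real.sqrt x + Real.sqrt y := Real.sqrt_sq (by positivity)

/-- If a feasible partition `P` of `J` minimizes total UCaC among all feasible partitions,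
then for any two distinct nonempty bins `S, S'` of `P`, the merged set `S ∪ S'` is
infeasible: `Σ_{j∈S∪S'} μ j + D·√(Σ_{j∈S∪S'} b j) > V`. -/
theorem optimal_partition_merge_infeasible
    (J : Finset ι) (μ b : ι → ℝ) (hb : ∀ j, 0 < b j) (V D : ℝ) (hD : 0 < D)
    (P : Finset (Finset ι)) (hP : IsFeasiblePartition J V D μ b P)
    (hopt : ∀ Q : Finset (Finset ι), IsFeasiblePartition J V D μ b Q →
      totalUCaC D μ b P ≤ totalUCaC D μ b Q)
    (S S' : Finset ι) (hS : S ∈ P) (hS' : S' ∈ P) (hne : S ≠ S')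
    (hSne : S.Nonempty) (hS'ne : S'.Nonempty) :
    (∑ j ∈ S ∪ S', μ j) + D * Real.sqrt (∑ j ∈ S ∪ S', b j) > V := by
  by_contra hV
  push_neg at hV
  obtain ⟨⟨hdisj, hsup⟩, hfeas⟩ := hP
  have hSS' : Disjoint S S' := hdisj S hS S' hS' hne
  set R : Finset (Finset ι) := (P.erase S).erase S' with hR
  have hRsub : R ⊆ P := (erase_subset _ _).trans (erase_subset _ _)
  have hSnotR : S ∉ R := fun h => (mem_erase.mp (mem_of_mem_erase h)).1 rfl
  have hS'notR : S' ∉ R := fun h => (mem_erase.mp h).1 rfl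
  have hUnotR : S ∪ S' ∉ R := by
    intro h
    have hd : Disjoint S (S ∪ S') := by
      refine hdisj S hS _ (hRsub h) ?_
      intro heq
      exact hSnotR (by rw [heq]; exact h)
    obtain ⟨j, hj⟩ := hSne
    exact (Finset.disjoint_left.mp hd) hj (mem_union_left _ hj)
  set Q : Finset (Finset ι) := insert (S ∪ S') R with hQ
  -- Q is a partition
  have hdisjR : ∀ T ∈ R, Disjoint (S ∪ S') T := by
    intro T hT
    have hTS : T ≠ S := fun h => hSnotR (h ▸ hT)
    have hTS' : T ≠ S' := fun h => hS'notR (h ▸ hT)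
    rw [disjoint_union_left]
    exact ⟨hdisj S hS T (hRsub hT) hTS.symm, hdisj S' hS' T (hRsub hT) hTS'.symm⟩
  have hQpart : IsBinPartition J Q := by
    constructor
    · intro T hT T' hT' hTT'
      rw [hQ, mem_insert] at hT hT'
      rcases hT with rfl | hT
      · rcases hT' with rfl | hT'
        · exact absurd rfl hTT'
        · exact hdisjR T' hT'
      · rcases hT' with rfl | hT'
        · exact (hdisjR T hT).symm
        · exact hdisj T (hRsub hT) T' (hRsub hT') hTT'
    · rw [hQ]
      apply le_antisymm
      · apply Finset.sup_le
        intro T hT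
        rcases mem_insert.mp hT with rfl | hT
        · rw [← hsup]
          exact sup_le_iff.mpr ⟨le_sup (f := id) hS, le_sup (f := id) hS'⟩
        · rw [← hsup]; exact le_sup (f := id) (hRsub hT)
      · rw [← hsup]
        apply Finset.sup_le
        intro T hT
        by_cases h1 : T = S
        · subst h1
          exact le_trans (subset_union_left) (le_sup (f := id) (mem_insert_self _ _))
        by_cases h2 : T = S'
        · subst h2
          exact le_trans (subset_union_right) (le_sup (f := id) (mem_insert_self _ _))
        · have : T ∈ R := mem_erase.mpr ⟨h2, mem_erase.mpr ⟨h1, hT⟩⟩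
          exact le_sup (f := id) (mem_insert_of_mem this)
  have hQfeas : IsFeasiblePartition J V D μ b Q := by
    refine ⟨hQpart, ?_⟩
    intro T hT
    rcases mem_insert.mp hT with rfl | hT
    · exact hV
    · exact hfeas T (hRsub hT)
  -- total UCaC of Q is strictly smaller
  have hbS : 0 < ∑ j ∈ S, b j := Finset.sum_pos (fun j _ => hb j) hSne
  have hbS' : 0 < ∑ j ∈ S', b j := Finset.sum_pos (fun j _ => hb j) hS'ne
  have hU : binUCaC D μ b (S ∪ S') < binUCaC D μ b S + binUCaC D μ b S' := by
    unfold binUCaC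
    rw [Finset.sum_union hSS', Finset.sum_union hSS']
    have := sqrt_add_lt hbS hbS'
    nlinarith
  have hPsum : totalUCaC D μ b P
      = binUCaC D μ b S + binUCaC D μ b S' + totalUCaC D μ b R := by
    unfold totalUCaC
    rw [hR, ← Finset.add_sum_erase _ _ hS, ← Finset.add_sum_erase _ _
      (mem_erase.mpr ⟨Ne.symm hne, hS'⟩)]
    ring
  have hQsum : totalUCaC D μ b Q
      = binUCaC D μ b (S ∪ S') + totalUCaC D μ b R := by
    unfold totalUCaC
    rw [hQ, Finset.sum_insert hUnotR]
  have := hopt Q hQfeas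
  rw [hPsum, hQsum] at this
  linarith
end

section
/- Consider the relaxed stochastic bin packing problem on empty machines: fix N, K ∈ ℕ, capacity V > 0, coefficient D > 0, means μ ∈ ℝ^K with μ_j ≥ 0, uncertainties b ∈ ℝ^K with b_j > 0 for all j, and demands m ∈ ℝ^K with m_j ≥ 0. If x* is feasible and minimizes UCaC(x) over all feasible allocations x, then for every feasible allocation x, the number of machines used by x* is at most the number of machines used by x; that is, minimizing UCaC leads to the least number of used machines. -/
open Finset

/-- Resource usage `g_i(x) = Σ_j x_{ij} μ_j + D·√(Σ_j x_{ij} b_j)` of machine `i`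
under the (relaxed, real-valued) allocation `x`. -/
noncomputable def machineUsage {N K : ℕ} (D : ℝ) (μ b : Fin K → ℝ)
    (x : Fin N → Fin K → ℝ) (i : Fin N) : ℝ :=
  (∑ j, x i j * μ j) + D * Real.sqrt (∑ j, x i j * b j)

/-- Feasibility of a relaxed allocation `x` on empty machines: nonnegative entries,
per-machine capacity constraint, and all demands satisfied. -/
noncomputable def FeasibleAlloc {N K : ℕ} (V D : ℝ) (μ b m : Fin K → ℝ)
    (x : Fin N → Fin K → ℝ) : Prop :=
  (∀ i j, 0 ≤ x i j) ∧ (∀ i, machineUsage D μ b x i ≤ V) ∧ (∀ j, ∑ i, x i j = m j)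

/-- The cluster UCaC of an allocation: the sum of machine usages. -/
noncomputable def clusterUCaC {N K : ℕ} (D : ℝ) (μ b : Fin K → ℝ)
    (x : Fin N → Fin K → ℝ) : ℝ :=
  ∑ i, machineUsage D μ b x i

/-- The number of machines used by an allocation `x`: machines with some nonzero entry. -/
noncomputable def usedMachines {N K : ℕ} (x : Fin N → Fin K → ℝ) : ℕ :=
  {i : Fin N | ∃ j, x i j ≠ 0}.ncard

private lemma usedMachines_eq {N K : ℕ} (x : Fin N → Fin K → ℝ) :
    usedMachines x = (Finset.univ.filter (fun i => ∃ j, x i j ≠ 0)).card := by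
  classical
  rw [usedMachines, Set.ncard_eq_toFinset_card']
  congr 1
  ext i
  simp

private lemma sqrt_add_le' (x y : ℝ) (hx : 0 ≤ x) (hy : 0 ≤ y) :
    Real.sqrt (x + y) ≤ Real.sqrt x + Real.sqrt y := by
  have h : Real.sqrt (x+y) ≤ Real.sqrt ((Real.sqrt x + Real.sqrt y)^2) := by
    apply Real.sqrt_le_sqrt
    nlinarith [Real.sq_sqrt hx, Real.sq_sqrt hy, Real.sqrt_nonneg x, Real.sqrt_nonneg y,
      mul_nonneg (Real.sqrt_nonneg x) (Real.sqrt_nonneg y)]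
  rwa [Real.sqrt_sq (by positivity)] at h

private lemma sqrt_move (a c t : ℝ) (ht : 0 < t) (hta : t ≤ a) (hac : a ≤ c) :
    Real.sqrt (a - t) + Real.sqrt (c + t) < Real.sqrt a + Real.sqrt c := by
  have h0 : (0:ℝ) ≤ a - t := by linarith
  have h1 : (0:ℝ) ≤ a := by linarith
  have h2 : (0:ℝ) ≤ c := by linarith
  have hq_lt_p : Real.sqrt (a-t) < Real.sqrt a := Real.sqrt_lt_sqrt h0 (by linarith)
  have hp_lt_s : Real.sqrt a < Real.sqrt (c+t) := Real.sqrt_lt_sqrt h1 (by linarith)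
  have hq_lt_r : Real.sqrt (a-t) < Real.sqrt c := Real.sqrt_lt_sqrt h0 (by linarith)
  nlinarith [Real.sq_sqrt h0, Real.sq_sqrt h1, Real.sq_sqrt h2,
    Real.sq_sqrt (by linarith : (0:ℝ) ≤ c + t),
    Real.sqrt_nonneg (a-t), Real.sqrt_nonneg a, Real.sqrt_nonneg c, Real.sqrt_nonneg (c+t),
    mul_pos (sub_pos.2 hq_lt_p)
      (by linarith : (0:ℝ) < (Real.sqrt (c+t) + Real.sqrt c) - (Real.sqrt a + Real.sqrt (a-t)))]

private lemma no_two_slack {N K : ℕ} (V D : ℝ) (hD : 0 < D)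
    (μ b m : Fin K → ℝ) (hμ : ∀ j, 0 ≤ μ j) (hb : ∀ j, 0 < b j)
    (xstar : Fin N → Fin K → ℝ) (hfeas : FeasibleAlloc V D μ b m xstar)
    (hopt : ∀ x : Fin N → Fin K → ℝ, FeasibleAlloc V D μ b m x →
      clusterUCaC D μ b xstar ≤ clusterUCaC D μ b x)
    (i k : Fin N) (hik : i ≠ k) (hiu : ∃ j, xstar i j ≠ 0)
    (hsle : (∑ j, xstar i j * b j) ≤ ∑ j, xstar k j * b j)
    (hgk : machineUsage D μ b xstar k < V) : False := by
  classical
  obtain ⟨hpos, hcap, hdem⟩ := hfeas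
  obtain ⟨j0, hj0⟩ := hiu
  have hxij : 0 < xstar i j0 := (hpos i j0).lt_of_ne (Ne.symm hj0)
  have hb0 : 0 < b j0 := hb j0
  have ha0 : 0 ≤ ∑ j, xstar i j * b j :=
    Finset.sum_nonneg fun j _ => mul_nonneg (hpos i j) (hb j).le
  have hc0 : 0 ≤ ∑ j, xstar k j * b j :=
    Finset.sum_nonneg fun j _ => mul_nonneg (hpos k j) (hb j).le
  have hax : xstar i j0 * b j0 ≤ ∑ j, xstar i j * b j :=
    Finset.single_le_sum (f := fun j => xstar i j * b j)
      (fun j _ => mul_nonneg (hpos i j) (hb j).le) (Finset.mem_univ j0)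
  -- choose a small ε
  obtain ⟨ε, hε0, hεx, hεcap⟩ : ∃ ε : ℝ, 0 < ε ∧ ε ≤ xstar i j0 ∧
      ε * μ j0 + D * Real.sqrt (ε * b j0) ≤ V - machineUsage D μ b xstar k := by
    have hδ : 0 < V - machineUsage D μ b xstar k := by linarith
    set δ := V - machineUsage D μ b xstar k with hδdef
    have hμ1 : (0:ℝ) < μ j0 + 1 := by linarith [hμ j0]
    refine ⟨min (xstar i j0) (min (δ / (2 * (μ j0 + 1))) (δ^2 / (4 * D^2 * b j0))),
      lt_min hxij (lt_min (div_pos hδ (by linarith)) (by positivity)), min_le_left _ _, ?_⟩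
    set ε := min (xstar i j0) (min (δ / (2 * (μ j0 + 1))) (δ^2 / (4 * D^2 * b j0))) with hεdef
    have hε0 : 0 < ε :=
      lt_min hxij (lt_min (div_pos hδ (by linarith)) (by positivity))
    have hε2 : ε ≤ δ / (2 * (μ j0 + 1)) := le_trans (min_le_right _ _) (min_le_left _ _)
    have hε3 : ε ≤ δ^2 / (4 * D^2 * b j0) := le_trans (min_le_right _ _) (min_le_right _ _)
    have hμbound : ε * μ j0 ≤ δ / 2 := by
      have h1 : ε * (2 * (μ j0 + 1)) ≤ δ := (le_div_iff₀ (by linarith)).mp hε2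
      nlinarith [hμ j0, hε0.le]
    have hsqrtbound : D * Real.sqrt (ε * b j0) ≤ δ / 2 := by
      have h1 : ε * b j0 ≤ (δ / (2*D))^2 := by
        have h := mul_le_mul_of_nonneg_right hε3 hb0.le
        have h2 : δ^2/(4*D^2*b j0) * b j0 = (δ/(2*D))^2 := by
          field_simp [hb0.ne', hD.ne']; ring
        linarith [h2 ▸ h]
      have h2 : Real.sqrt (ε * b j0) ≤ δ / (2*D) := by
        calc Real.sqrt (ε * b j0) ≤ Real.sqrt ((δ/(2*D))^2) := Real.sqrt_le_sqrt h1
          _ = δ/(2*D) := Real.sqrt_sq (by positivity)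
      calc D * Real.sqrt (ε * b j0) ≤ D * (δ/(2*D)) := by nlinarith
        _ = δ/2 := by field_simp [hD.ne']
    linarith
  have hta : ε * b j0 ≤ ∑ j, xstar i j * b j :=
    le_trans (mul_le_mul_of_nonneg_right hεx hb0.le) hax
  -- the perturbed allocation
  set y : Fin N → Fin K → ℝ := fun p q =>
    xstar p q + (if q = j0 then (if p = i then -ε else if p = k then ε else 0) else 0) with hy
  have rowsum : ∀ (p : Fin N) (f : Fin K → ℝ), (∑ q, y p q * f q)
      = (∑ q, xstar p q * f q) + (if p = i then -ε else if p = k then ε else 0) * f j0 := by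
    intro p f
    have hpt : ∀ q, y p q * f q = xstar p q * f q +
        (if q = j0 then (if p = i then -ε else if p = k then ε else 0) * f q else 0) := by
      intro q; simp only [hy]; split_ifs <;> ring
    rw [Finset.sum_congr rfl (fun q _ => hpt q), Finset.sum_add_distrib,
      Finset.sum_ite_eq' Finset.univ j0]
    simp
  have colsum : ∀ q, (∑ p, y p q) = m q := by
    intro q
    have hpt : ∀ p : Fin N, y p q = xstar p q +
        ((if p = i then (if q = j0 then -ε else 0) else 0)
          + (if p = k then (if q = j0 then ε else 0) else 0)) := by
      intro p
      by_cases hpi : p = i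
      · subst hpi
        by_cases hq : q = j0 <;> simp [hy, hq, hik]
      · by_cases hpk : p = k
        · subst hpk
          by_cases hq : q = j0 <;> simp [hy, hq, hpi]
        · by_cases hq : q = j0 <;> simp [hy, hq, hpi, hpk]
    rw [Finset.sum_congr rfl (fun p _ => hpt p), Finset.sum_add_distrib,
      Finset.sum_add_distrib, Finset.sum_ite_eq' Finset.univ i,
      Finset.sum_ite_eq' Finset.univ k, hdem q]
    by_cases hq : q = j0 <;> simp [hq]
  have hgki : machineUsage D μ b xstar k
      = (∑ q, xstar k q * μ q) + D * Real.sqrt (∑ q, xstar k q * b q) := rfl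
  have hfy : FeasibleAlloc V D μ b m y := by
    refine ⟨?_, ?_, colsum⟩
    · intro p q
      simp only [hy]
      split_ifs with h h1 h2
      · subst h; subst h1; linarith
      · linarith [hpos p q, hε0.le]
      · simpa using hpos p q
      · simpa using hpos p q
    · intro p
      unfold machineUsage
      rw [rowsum p μ, rowsum p b]
      rcases eq_or_ne p i with rfl | h
      · rw [if_pos rfl]
        have h1 : Real.sqrt ((∑ q, xstar p q * b q) + -ε * b j0)
            ≤ Real.sqrt (∑ q, xstar p q * b q) := by
          apply Real.sqrt_le_sqrt
          nlinarith [mul_nonneg hε0.le hb0.le]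
        have h2 := hcap p
        unfold machineUsage at h2
        nlinarith [hμ j0, hε0.le, hD.le, mul_le_mul_of_nonneg_left h1 hD.le]
      · rcases eq_or_ne p k with rfl | h'
        · rw [if_neg h, if_pos rfl]
          have h1 : Real.sqrt ((∑ q, xstar p q * b q) + ε * b j0)
              ≤ Real.sqrt (∑ q, xstar p q * b q) + Real.sqrt (ε * b j0) :=
            sqrt_add_le' _ _ hc0 (by positivity)
          have h3 : D * Real.sqrt ((∑ q, xstar p q * b q) + ε * b j0)
              ≤ D * Real.sqrt (∑ q, xstar p q * b q) + D * Real.sqrt (ε * b j0) := by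
            nlinarith [mul_le_mul_of_nonneg_left h1 hD.le]
          rw [hgki] at hεcap
          linarith
        · rw [if_neg h, if_neg h']
          have h2 := hcap p
          unfold machineUsage at h2
          simpa using h2
  -- strict decrease of UCaC
  have hdiff : clusterUCaC D μ b y - clusterUCaC D μ b xstar
      = (machineUsage D μ b y i - machineUsage D μ b xstar i)
        + (machineUsage D μ b y k - machineUsage D μ b xstar k) := by
    have hzero : ∀ p ∈ Finset.univ, p ∉ ({i, k} : Finset (Fin N)) →
        machineUsage D μ b y p - machineUsage D μ b xstar p = 0 := by
      intro p _ hp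
      simp only [Finset.mem_insert, Finset.mem_singleton, not_or] at hp
      unfold machineUsage
      rw [rowsum p μ, rowsum p b]
      rw [if_neg hp.1, if_neg hp.2]
      simp only [zero_mul, add_zero]
      ring
    have hsum : (∑ p, (machineUsage D μ b y p - machineUsage D μ b xstar p))
        = ∑ p ∈ ({i, k} : Finset (Fin N)),
            (machineUsage D μ b y p - machineUsage D μ b xstar p) :=
      (Finset.sum_subset (Finset.subset_univ _) hzero).symm
    unfold clusterUCaC
    rw [← Finset.sum_sub_distrib, hsum, Finset.sum_pair hik]
  have hyi : machineUsage D μ b y i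
      = (∑ q, xstar i q * μ q) + -ε * μ j0
        + D * Real.sqrt ((∑ q, xstar i q * b q) - ε * b j0) := by
    unfold machineUsage
    rw [rowsum i μ, rowsum i b, if_pos rfl]
    ring_nf
  have hyk : machineUsage D μ b y k
      = (∑ q, xstar k q * μ q) + ε * μ j0
        + D * Real.sqrt ((∑ q, xstar k q * b q) + ε * b j0) := by
    unfold machineUsage
    rw [rowsum k μ, rowsum k b, if_neg (Ne.symm hik), if_pos rfl]
  have hlt : clusterUCaC D μ b y < clusterUCaC D μ b xstar := by
    have hsm := sqrt_move (∑ j, xstar i j * b j) (∑ j, xstar k j * b j) (ε * b j0)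
      (mul_pos hε0 hb0) hta hsle
    have h1 : clusterUCaC D μ b y - clusterUCaC D μ b xstar
        = D * (Real.sqrt ((∑ j, xstar i j * b j) - ε * b j0)
            + Real.sqrt ((∑ j, xstar k j * b j) + ε * b j0)
            - (Real.sqrt (∑ j, xstar i j * b j) + Real.sqrt (∑ j, xstar k j * b j))) := by
      rw [hdiff, hyi, hyk]
      unfold machineUsage
      ring
    nlinarith [mul_pos hD (sub_pos.2 hsm)]
  exact absurd (hopt y hfy) (not_le.2 hlt)

/-- Relaxed consistency (Theorem 3): in the relaxed SBPP on empty machines, an allocation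
minimizing the cluster UCaC among all feasible allocations uses the least number of
machines. -/
theorem relaxed_consistency (N K : ℕ) (V D : ℝ) (hV : 0 < V) (hD : 0 < D)
    (μ b m : Fin K → ℝ) (hμ : ∀ j, 0 ≤ μ j) (hb : ∀ j, 0 < b j) (hm : ∀ j, 0 ≤ m j)
    (xstar : Fin N → Fin K → ℝ) (hxstar : FeasibleAlloc V D μ b m xstar)
    (hopt : ∀ x : Fin N → Fin K → ℝ, FeasibleAlloc V D μ b m x →
      clusterUCaC D μ b xstar ≤ clusterUCaC D μ b x) :
    ∀ x : Fin N → Fin K → ℝ, FeasibleAlloc V D μ b m x →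
      usedMachines xstar ≤ usedMachines x := by
  classical
  intro x hx
  have unused_zero : ∀ (z : Fin N → Fin K → ℝ),
      ∀ p : Fin N, ¬(∃ j, z p j ≠ 0) → machineUsage D μ b z p = 0 := by
    intro z p hp
    push_neg at hp
    simp [machineUsage, hp]
  have used_pos : ∀ (z : Fin N → Fin K → ℝ), (∀ p j, 0 ≤ z p j) →
      ∀ p : Fin N, (∃ j, z p j ≠ 0) → 0 < machineUsage D μ b z p := by
    rintro z hz p ⟨j, hj⟩
    have hsp : 0 < ∑ q, z p q * b q :=
      Finset.sum_pos' (fun q _ => mul_nonneg (hz p q) (hb q).le)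
        ⟨j, Finset.mem_univ j, mul_pos ((hz p j).lt_of_ne (Ne.symm hj)) (hb j)⟩
    have h1 : 0 ≤ ∑ q, z p q * μ q :=
      Finset.sum_nonneg fun q _ => mul_nonneg (hz p q) (hμ q)
    have h2 : 0 < Real.sqrt (∑ q, z p q * b q) := Real.sqrt_pos.2 hsp
    unfold machineUsage
    nlinarith
  have sum_used : ∀ (z : Fin N → Fin K → ℝ),
      clusterUCaC D μ b z
        = ∑ p ∈ Finset.univ.filter (fun p => ∃ j, z p j ≠ 0), machineUsage D μ b z p := by
    intro z
    unfold clusterUCaC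
    refine (Finset.sum_subset (Finset.filter_subset _ _) ?_).symm
    intro p _ hp
    simp only [Finset.mem_filter, Finset.mem_univ, true_and] at hp
    exact unused_zero z p hp
  set Tx := Finset.univ.filter (fun p => ∃ j, x p j ≠ 0) with hTx
  have hupper : clusterUCaC D μ b x ≤ (usedMachines x : ℝ) * V := by
    rw [usedMachines_eq, ← hTx, sum_used x, ← hTx]
    calc (∑ p ∈ Tx, machineUsage D μ b x p) ≤ ∑ p ∈ Tx, V :=
          Finset.sum_le_sum (fun p _ => hx.2.1 p)
      _ = (Tx.card : ℝ) * V := by rw [Finset.sum_const, nsmul_eq_mul]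
  set Ts := Finset.univ.filter (fun p => ∃ j, xstar p j ≠ 0) with hTs
  set B := Ts.filter (fun p => machineUsage D μ b xstar p < V) with hB
  have hBsub : B ⊆ Ts := Finset.filter_subset _ _
  have hB1 : B.card ≤ 1 := by
    by_contra hcon
    push_neg at hcon
    obtain ⟨i, hi, k, hk, hik⟩ := Finset.one_lt_card.mp hcon
    have hiT := hBsub hi
    have hkT := hBsub hk
    simp only [hTs, Finset.mem_filter, Finset.mem_univ, true_and] at hiT hkT
    simp only [hB, Finset.mem_filter] at hi hk
    rcases le_total (∑ j, xstar i j * b j) (∑ j, xstar k j * b j) with h' | h'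
    · exact no_two_slack V D hD μ b m hμ hb xstar hxstar hopt i k hik hiT h' hk.2
    · exact no_two_slack V D hD μ b m hμ hb xstar hxstar hopt k i hik.symm hkT h' hi.2
  have hlower : ((Ts.card : ℝ) - 1) * V < clusterUCaC D μ b xstar := by
    have hsplit := sum_used xstar
    rw [← hTs] at hsplit
    rcases Finset.eq_empty_or_nonempty B with hBe | ⟨p0, hp0⟩
    · have hfull : ∀ p ∈ Ts, V ≤ machineUsage D μ b xstar p := by
        intro p hp
        by_contra hlt
        push_neg at hlt
        have hmem : p ∈ B := by
          rw [hB, Finset.mem_filter]; exact ⟨hp, hlt⟩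
        rw [hBe] at hmem
        simp at hmem
      have h1 : (Ts.card : ℝ) * V ≤ ∑ p ∈ Ts, machineUsage D μ b xstar p := by
        calc (Ts.card : ℝ) * V = ∑ _p ∈ Ts, V := by rw [Finset.sum_const, nsmul_eq_mul]
          _ ≤ _ := Finset.sum_le_sum hfull
      rw [hsplit]
      nlinarith
    · have hBeq : B = {p0} :=
        Finset.eq_singleton_iff_unique_mem.mpr
          ⟨hp0, fun q hq => Finset.card_le_one.mp hB1 q hq p0 hp0⟩
      have hp0T := hBsub hp0
      have hp0used : ∃ j, xstar p0 j ≠ 0 := by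
        have h := hp0T
        simp only [hTs, Finset.mem_filter, Finset.mem_univ, true_and] at h
        exact h
      have hgp0 : 0 < machineUsage D μ b xstar p0 := used_pos xstar hxstar.1 p0 hp0used
      have hcards : (Ts \ B).card = Ts.card - 1 := by
        rw [Finset.card_sdiff_of_subset hBsub, hBeq, Finset.card_singleton]
      have h1 : ((Ts \ B).card : ℝ) * V ≤ ∑ p ∈ Ts \ B, machineUsage D μ b xstar p := by
        calc ((Ts \ B).card : ℝ) * V = ∑ _p ∈ Ts \ B, V := by
              rw [Finset.sum_const, nsmul_eq_mul]
          _ ≤ _ := Finset.sum_le_sum (fun p hp => by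
              rw [Finset.mem_sdiff] at hp
              have h := hp.2
              simp only [hB, Finset.mem_filter, not_and, not_lt] at h
              exact h hp.1)
      have h2 : ∑ p ∈ B, machineUsage D μ b xstar p = machineUsage D μ b xstar p0 := by
        rw [hBeq, Finset.sum_singleton]
      have h3 := Finset.sum_sdiff (f := machineUsage D μ b xstar) hBsub
      have hTs1 : 1 ≤ Ts.card := Finset.card_pos.mpr ⟨p0, hp0T⟩
      have hcast : ((Ts \ B).card : ℝ) = (Ts.card : ℝ) - 1 := by
        rw [hcards, Nat.cast_sub hTs1, Nat.cast_one]
      rw [hsplit, ← h3]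
      rw [hcast] at h1
      linarith
  have hux : usedMachines xstar = Ts.card := by rw [usedMachines_eq, hTs]
  have hfin : ((usedMachines xstar : ℝ) - 1) * V < (usedMachines x : ℝ) * V := by
    rw [hux]
    exact lt_of_lt_of_le hlower (le_trans (hopt x hx) hupper)
  have h4 : (usedMachines xstar : ℝ) - 1 < (usedMachines x : ℝ) :=
    lt_of_mul_lt_mul_right hfin hV.le
  have h5 : (usedMachines xstar : ℝ) < (usedMachines x : ℝ) + 1 := by linarith
  have h6 : usedMachines xstar < usedMachines x + 1 := by exact_mod_cast h5
  omega
end
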